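/- Let τ, h₁, h₂ > 0, let N₁, N₂ be positive integers, and let Uⁿ, Vⁿ, Rⁿ and W be (N₁,N₂)-periodic grid functions ℤ × ℤ → ℝ. Then there exists a unique triple (Uⁿ⁺¹, Vⁿ⁺¹, Rⁿ⁺¹) of (N₁,N₂)-periodic grid functions satisfying, for all (j₁,j₂) ∈ ℤ²: (Uⁿ⁺¹(j₁,j₂) − Uⁿ(j₁,j₂))/τ = (Vⁿ⁺¹(j₁,j₂) + Vⁿ(j₁,j₂))/2; (Vⁿ⁺¹(j₁,j₂) − Vⁿ(j₁,j₂))/τ = (δ_x²((Uⁿ⁺¹+Uⁿ)/2))(j₁,j₂) + (δ_y²((Uⁿ⁺¹+Uⁿ)/2))(j₁,j₂) − b(W(j₁,j₂))·(Rⁿ⁺¹(j₁,j₂) + Rⁿ(j₁,j₂))/2; (Rⁿ⁺¹(j₁,j₂) − Rⁿ(j₁,j₂))/τ = (1/2)·b(W(j₁,j₂))·(Vⁿ⁺¹(j₁,j₂) + Vⁿ(j₁,j₂))/2. -/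

import Mathlib

/-- The function `b(x) = sin x / √(2 - cos x)`. -/
noncomputable def b (x : ℝ) : ℝ := Real.sin x / Real.sqrt (2 - Real.cos x)

/-- Second central difference in the first index, with mesh size `h₁`. -/
noncomputable def dxx (h₁ : ℝ) (W : ℤ × ℤ → ℝ) : ℤ × ℤ → ℝ :=
  fun j => (W (j.1 + 1, j.2) - 2 * W (j.1, j.2) + W (j.1 - 1, j.2)) / h₁ ^ 2

/-- Second central difference in the second index, with mesh size `h₂`. -/
noncomputable def dyy (h₂ : ℝ) (W : ℤ × ℤ → ℝ) : ℤ × ℤ → ℝ :=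
  fun j => (W (j.1, j.2 + 1) - 2 * W (j.1, j.2) + W (j.1, j.2 - 1)) / h₂ ^ 2

/-- An `(N₁,N₂)`-periodic grid function. -/
def GridPeriodic (N₁ N₂ : ℕ) (W : ℤ × ℤ → ℝ) : Prop :=
  ∀ j₁ j₂ : ℤ, W (j₁ + N₁, j₂) = W (j₁, j₂) ∧ W (j₁, j₂ + N₂) = W (j₁, j₂)

namespace LILEP

section Torus
variable {N₁ N₂ : ℕ} [NeZero N₁] [NeZero N₂]

noncomputable def Aop (h₁ h₂ : ℝ) (c : ZMod N₁ × ZMod N₂ → ℝ) :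
    ((ZMod N₁ × ZMod N₂) → ℝ) →ₗ[ℝ] ((ZMod N₁ × ZMod N₂) → ℝ) where
  toFun x := fun k => c k * x k
    - (1/2) * ((x (k.1 + 1, k.2) - 2 * x k + x (k.1 - 1, k.2)) / h₁ ^ 2
             + (x (k.1, k.2 + 1) - 2 * x k + x (k.1, k.2 - 1)) / h₂ ^ 2)
  map_add' := by intro a b; funext k; simp only [Pi.add_apply]; ring
  map_smul' := by intro m a; funext k; simp only [Pi.smul_apply, smul_eq_mul,
    RingHom.id_apply]; ring

lemma keysum (x : ZMod N₁ × ZMod N₂ → ℝ) (σ : (ZMod N₁ × ZMod N₂) ≃ (ZMod N₁ × ZMod N₂)) :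
    ∑ k, x k * (x (σ k) - 2 * x k + x (σ.symm k)) + ∑ k, (x (σ k) - x k) ^ 2 = 0 := by
  have h1 : ∑ k, (x (σ k)) ^ 2 = ∑ k, x k ^ 2 :=
    Fintype.sum_equiv σ _ _ (fun k => rfl)
  have h2 : ∑ m, x (σ m) * x m = ∑ k, x k * x (σ.symm k) :=
    Fintype.sum_equiv σ (fun m => x (σ m) * x m) (fun k => x k * x (σ.symm k))
      (fun m => by simp)
  rw [← Finset.sum_add_distrib]
  have expand : ∀ k, x k * (x (σ k) - 2 * x k + x (σ.symm k)) + (x (σ k) - x k) ^ 2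
      = (x (σ k)) ^ 2 - x (σ k) * x k - x k ^ 2 + x k * x (σ.symm k) := fun k => by ring
  rw [Finset.sum_congr rfl (fun k _ => expand k)]
  simp only [Finset.sum_add_distrib, Finset.sum_sub_distrib]
  linarith [h1, h2]

lemma Aop_bijective (h₁ h₂ : ℝ) (c : ZMod N₁ × ZMod N₂ → ℝ) (hc : ∀ k, 0 < c k) :
    Function.Bijective (Aop (N₁ := N₁) (N₂ := N₂) h₁ h₂ c) := by
  have hinj : Function.Injective (Aop (N₁ := N₁) (N₂ := N₂) h₁ h₂ c) := by
    rw [injective_iff_map_eq_zero]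
    intro x hx
    set σ₁ : (ZMod N₁ × ZMod N₂) ≃ (ZMod N₁ × ZMod N₂) :=
      Equiv.addRight ((1 : ZMod N₁), (0 : ZMod N₂)) with hσ₁
    set σ₂ : (ZMod N₁ × ZMod N₂) ≃ (ZMod N₁ × ZMod N₂) :=
      Equiv.addRight ((0 : ZMod N₁), (1 : ZMod N₂)) with hσ₂
    have hσ₁app : ∀ k : ZMod N₁ × ZMod N₂, σ₁ k = (k.1 + 1, k.2) := by
      intro k; simp [hσ₁, Prod.ext_iff]
    have hσ₁symm : ∀ k : ZMod N₁ × ZMod N₂, σ₁.symm k = (k.1 - 1, k.2) := by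
      intro k; simp [hσ₁, Prod.ext_iff, sub_eq_add_neg]
    have hσ₂app : ∀ k : ZMod N₁ × ZMod N₂, σ₂ k = (k.1, k.2 + 1) := by
      intro k; simp [hσ₂, Prod.ext_iff]
    have hσ₂symm : ∀ k : ZMod N₁ × ZMod N₂, σ₂.symm k = (k.1, k.2 - 1) := by
      intro k; simp [hσ₂, Prod.ext_iff, sub_eq_add_neg]
    have hzero : ∀ k, c k * x k
        - (1/2) * ((x (k.1 + 1, k.2) - 2 * x k + x (k.1 - 1, k.2)) / h₁ ^ 2
             + (x (k.1, k.2 + 1) - 2 * x k + x (k.1, k.2 - 1)) / h₂ ^ 2) = 0 := by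
      intro k; exact congrFun hx k
    have hsum : ∑ k, x k * (c k * x k
        - (1/2) * ((x (k.1 + 1, k.2) - 2 * x k + x (k.1 - 1, k.2)) / h₁ ^ 2
             + (x (k.1, k.2 + 1) - 2 * x k + x (k.1, k.2 - 1)) / h₂ ^ 2)) = 0 := by
      apply Finset.sum_eq_zero; intro k _; rw [hzero k]; ring
    have e1 : ∑ k, x k * (x (k.1 + 1, k.2) - 2 * x k + x (k.1 - 1, k.2))
        = - ∑ k, (x (k.1 + 1, k.2) - x k) ^ 2 := by
      have := keysum x σ₁
      simp only [hσ₁app, hσ₁symm] at this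
      linarith
    have e2 : ∑ k, x k * (x (k.1, k.2 + 1) - 2 * x k + x (k.1, k.2 - 1))
        = - ∑ k, (x (k.1, k.2 + 1) - x k) ^ 2 := by
      have := keysum x σ₂
      simp only [hσ₂app, hσ₂symm] at this
      linarith
    have expand : ∑ k, x k * (c k * x k
        - (1/2) * ((x (k.1 + 1, k.2) - 2 * x k + x (k.1 - 1, k.2)) / h₁ ^ 2
             + (x (k.1, k.2 + 1) - 2 * x k + x (k.1, k.2 - 1)) / h₂ ^ 2))
        = ∑ k, c k * x k ^ 2
          - (1 / (2 * h₁ ^ 2)) * ∑ k, x k * (x (k.1 + 1, k.2) - 2 * x k + x (k.1 - 1, k.2))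
          - (1 / (2 * h₂ ^ 2)) * ∑ k, x k * (x (k.1, k.2 + 1) - 2 * x k + x (k.1, k.2 - 1)) := by
      rw [Finset.mul_sum, Finset.mul_sum, ← Finset.sum_sub_distrib, ← Finset.sum_sub_distrib]
      apply Finset.sum_congr rfl; intro k _; ring
    have hQ1 : (0:ℝ) ≤ ∑ k, (x (k.1 + 1, k.2) - x k) ^ 2 :=
      Finset.sum_nonneg fun k _ => sq_nonneg _
    have hQ2 : (0:ℝ) ≤ ∑ k, (x (k.1, k.2 + 1) - x k) ^ 2 :=
      Finset.sum_nonneg fun k _ => sq_nonneg _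
    have hd1 : (0:ℝ) ≤ 1 / (2 * h₁ ^ 2) := by positivity
    have hd2 : (0:ℝ) ≤ 1 / (2 * h₂ ^ 2) := by positivity
    have hfinal : ∑ k, c k * x k ^ 2 ≤ 0 := by
      rw [expand, e1, e2] at hsum
      nlinarith [mul_nonneg hd1 hQ1, mul_nonneg hd2 hQ2]
    have hsum0 : ∑ k, c k * x k ^ 2 = 0 :=
      le_antisymm hfinal (Finset.sum_nonneg fun k _ => mul_nonneg (hc k).le (sq_nonneg _))
    have hterm := (Finset.sum_eq_zero_iff_of_nonneg
      (fun k _ => mul_nonneg (hc k).le (sq_nonneg (x k)))).1 hsum0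
    funext k
    have hk := hterm k (Finset.mem_univ k)
    have hx2 : x k ^ 2 = 0 := by
      rcases mul_eq_zero.1 hk with h | h
      · exact absurd h (hc k).ne'
      · exact h
    simpa using pow_eq_zero_iff (n := 2) (by norm_num) |>.1 hx2
  exact ⟨hinj, LinearMap.injective_iff_surjective.1 hinj⟩

end Torus

section Descent
variable {N₁ N₂ : ℕ} [NeZero N₁] [NeZero N₂] {X : ℤ × ℤ → ℝ}

omit [NeZero N₁] [NeZero N₂] in
lemma shift_mul₁ (hX : GridPeriodic N₁ N₂ X) (k : ℤ) (j₁ j₂ : ℤ) :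
    X (j₁ + k * N₁, j₂) = X (j₁, j₂) := by
  induction k using Int.induction_on with
  | zero => simp
  | succ n ih =>
      have : j₁ + (n + 1 : ℤ) * N₁ = (j₁ + n * N₁) + N₁ := by ring
      rw [this, (hX (j₁ + n * N₁) j₂).1, ih]
  | pred n ih =>
      have : (j₁ + (-n : ℤ) * N₁) = (j₁ + (-n - 1 : ℤ) * N₁) + N₁ := by ring
      rw [this] at ih
      rw [← (hX (j₁ + (-n - 1 : ℤ) * N₁) j₂).1, ih]

omit [NeZero N₁] [NeZero N₂] in
lemma shift_mul₂ (hX : GridPeriodic N₁ N₂ X) (k : ℤ) (j₁ j₂ : ℤ) :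
    X (j₁, j₂ + k * N₂) = X (j₁, j₂) := by
  induction k using Int.induction_on with
  | zero => simp
  | succ n ih =>
      have : j₂ + (n + 1 : ℤ) * N₂ = (j₂ + n * N₂) + N₂ := by ring
      rw [this, (hX j₁ (j₂ + n * N₂)).2, ih]
  | pred n ih =>
      have : (j₂ + (-n : ℤ) * N₂) = (j₂ + (-n - 1 : ℤ) * N₂) + N₂ := by ring
      rw [this] at ih
      rw [← (hX j₁ (j₂ + (-n - 1 : ℤ) * N₂)).2, ih]

omit [NeZero N₁] [NeZero N₂] in
lemma periodic_congr (hX : GridPeriodic N₁ N₂ X) {a₁ a₂ b₁ b₂ : ℤ}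
    (h1 : (a₁ : ZMod N₁) = (b₁ : ZMod N₁)) (h2 : (a₂ : ZMod N₂) = (b₂ : ZMod N₂)) :
    X (a₁, a₂) = X (b₁, b₂) := by
  obtain ⟨k₁, hk₁⟩ := ((ZMod.intCast_eq_intCast_iff a₁ b₁ N₁).1 h1).dvd
  obtain ⟨k₂, hk₂⟩ := ((ZMod.intCast_eq_intCast_iff a₂ b₂ N₂).1 h2).dvd
  have hb₁ : b₁ = a₁ + k₁ * N₁ := by linarith [hk₁]
  have hb₂ : b₂ = a₂ + k₂ * N₂ := by linarith [hk₂]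
  rw [hb₁, hb₂, shift_mul₂ hX, shift_mul₁ hX]

/-- Descend a periodic grid function to the discrete torus. -/
def descG (N₁ N₂ : ℕ) (X : ℤ × ℤ → ℝ) : ZMod N₁ × ZMod N₂ → ℝ :=
  fun k => X ((k.1.val : ℤ), (k.2.val : ℤ))

lemma val_intCast (a : ZMod N₁) : ((a.val : ℤ) : ZMod N₁) = a := by
  push_cast
  simp [ZMod.natCast_val, ZMod.cast_id]

lemma descG_eq (hX : GridPeriodic N₁ N₂ X) {a : ZMod N₁} {c : ZMod N₂} {p q : ℤ}
    (hp : (p : ZMod N₁) = a) (hq : (q : ZMod N₂) = c) :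
    descG N₁ N₂ X (a, c) = X (p, q) := by
  unfold descG
  exact periodic_congr hX (by rw [val_intCast, hp]) (by rw [val_intCast, hq])

lemma lift_descG (hX : GridPeriodic N₁ N₂ X) (j₁ j₂ : ℤ) :
    X (j₁, j₂) = descG N₁ N₂ X ((j₁ : ZMod N₁), (j₂ : ZMod N₂)) :=
  (descG_eq hX rfl rfl).symm

end Descent

/-- The right-hand side of the reduced scheme, on the torus. -/
noncomputable def fvec (τ h₁ h₂ : ℝ) (N₁ N₂ : ℕ) (Un Vn Rn W : ℤ × ℤ → ℝ) :
    ZMod N₁ × ZMod N₂ → ℝ := fun k =>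
  (2 / τ ^ 2 + (b (descG N₁ N₂ W k)) ^ 2 / 4) * descG N₁ N₂ Un k
  + (1/2) * ((descG N₁ N₂ Un (k.1 + 1, k.2) - 2 * descG N₁ N₂ Un k
        + descG N₁ N₂ Un (k.1 - 1, k.2)) / h₁ ^ 2
      + (descG N₁ N₂ Un (k.1, k.2 + 1) - 2 * descG N₁ N₂ Un k
        + descG N₁ N₂ Un (k.1, k.2 - 1)) / h₂ ^ 2)
  + 2 * descG N₁ N₂ Vn k / τ - b (descG N₁ N₂ W k) * descG N₁ N₂ Rn k

end LILEP

open LILEP in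
theorem LI_LEP_unique_solvability
    (τ h₁ h₂ : ℝ) (hτ : 0 < τ) (hh₁ : 0 < h₁) (hh₂ : 0 < h₂)
    (N₁ N₂ : ℕ) (hN₁ : 0 < N₁) (hN₂ : 0 < N₂)
    (Un Vn Rn W : ℤ × ℤ → ℝ)
    (hUn : GridPeriodic N₁ N₂ Un) (hVn : GridPeriodic N₁ N₂ Vn)
    (hRn : GridPeriodic N₁ N₂ Rn) (hW : GridPeriodic N₁ N₂ W) :
    ∃! UVR : (ℤ × ℤ → ℝ) × (ℤ × ℤ → ℝ) × (ℤ × ℤ → ℝ),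
      GridPeriodic N₁ N₂ UVR.1 ∧ GridPeriodic N₁ N₂ UVR.2.1 ∧
      GridPeriodic N₁ N₂ UVR.2.2 ∧
      (∀ j : ℤ × ℤ,
        (UVR.1 j - Un j) / τ = (UVR.2.1 j + Vn j) / 2) ∧
      (∀ j : ℤ × ℤ,
        (UVR.2.1 j - Vn j) / τ =
          dxx h₁ (fun k => (UVR.1 k + Un k) / 2) j
          + dyy h₂ (fun k => (UVR.1 k + Un k) / 2) j
          - b (W j) * (UVR.2.2 j + Rn j) / 2) ∧
      (∀ j : ℤ × ℤ,
        (UVR.2.2 j - Rn j) / τ =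
          (1/2) * b (W j) * (UVR.2.1 j + Vn j) / 2) := by
  haveI : NeZero N₁ := ⟨hN₁.ne'⟩
  haveI : NeZero N₂ := ⟨hN₂.ne'⟩
  have hτ' : τ ≠ 0 := hτ.ne'
  set c : ZMod N₁ × ZMod N₂ → ℝ :=
    fun k => 2 / τ ^ 2 + (b (descG N₁ N₂ W k)) ^ 2 / 4 with hcdef
  have hc : ∀ k, 0 < c k := by
    intro k; rw [hcdef]; positivity
  obtain ⟨u, hu⟩ := (Aop_bijective h₁ h₂ c hc).2 (fvec τ h₁ h₂ N₁ N₂ Un Vn Rn W)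
  -- cast helper lemmas
  have castN₁ : ∀ j : ℤ, ((j + (N₁ : ℤ) : ℤ) : ZMod N₁) = (j : ZMod N₁) := by
    intro j; push_cast; simp
  have castN₂ : ∀ j : ℤ, ((j + (N₂ : ℤ) : ℤ) : ZMod N₂) = (j : ZMod N₂) := by
    intro j; push_cast; simp
  -- the candidate solution
  set U' : ℤ × ℤ → ℝ := fun j => u ((j.1 : ZMod N₁), (j.2 : ZMod N₂)) with hU'def
  set V' : ℤ × ℤ → ℝ := fun j => 2 * (U' j - Un j) / τ - Vn j with hV'def
  set R' : ℤ × ℤ → ℝ := fun j => Rn j + b (W j) / 2 * (U' j - Un j) with hR'def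
  have hU'per : GridPeriodic N₁ N₂ U' := by
    intro j₁ j₂
    constructor
    · show u _ = u _
      rw [castN₁]
    · show u _ = u _
      rw [castN₂]
  have hV'per : GridPeriodic N₁ N₂ V' := by
    intro j₁ j₂
    constructor
    · show 2 * (U' (j₁ + N₁, j₂) - Un (j₁ + N₁, j₂)) / τ - Vn (j₁ + N₁, j₂) = _
      rw [(hU'per j₁ j₂).1, (hUn j₁ j₂).1, (hVn j₁ j₂).1]
    · show 2 * (U' (j₁, j₂ + N₂) - Un (j₁, j₂ + N₂)) / τ - Vn (j₁, j₂ + N₂) = _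
      rw [(hU'per j₁ j₂).2, (hUn j₁ j₂).2, (hVn j₁ j₂).2]
  have hR'per : GridPeriodic N₁ N₂ R' := by
    intro j₁ j₂
    constructor
    · show Rn (j₁ + N₁, j₂) + b (W (j₁ + N₁, j₂)) / 2 * (U' (j₁ + N₁, j₂) - Un (j₁ + N₁, j₂)) = _
      rw [(hU'per j₁ j₂).1, (hUn j₁ j₂).1, (hRn j₁ j₂).1, (hW j₁ j₂).1]
    · show Rn (j₁, j₂ + N₂) + b (W (j₁, j₂ + N₂)) / 2 * (U' (j₁, j₂ + N₂) - Un (j₁, j₂ + N₂)) = _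
      rw [(hU'per j₁ j₂).2, (hUn j₁ j₂).2, (hRn j₁ j₂).2, (hW j₁ j₂).2]
  -- the key pointwise identity satisfied by U'
  have hkey : ∀ j₁ j₂ : ℤ,
      (2 / τ ^ 2 + (b (W (j₁, j₂))) ^ 2 / 4) * U' (j₁, j₂)
      - (1/2) * ((U' (j₁ + 1, j₂) - 2 * U' (j₁, j₂) + U' (j₁ - 1, j₂)) / h₁ ^ 2
          + (U' (j₁, j₂ + 1) - 2 * U' (j₁, j₂) + U' (j₁, j₂ - 1)) / h₂ ^ 2)
      = (2 / τ ^ 2 + (b (W (j₁, j₂))) ^ 2 / 4) * Un (j₁, j₂)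
      + (1/2) * ((Un (j₁ + 1, j₂) - 2 * Un (j₁, j₂) + Un (j₁ - 1, j₂)) / h₁ ^ 2
          + (Un (j₁, j₂ + 1) - 2 * Un (j₁, j₂) + Un (j₁, j₂ - 1)) / h₂ ^ 2)
      + 2 * Vn (j₁, j₂) / τ - b (W (j₁, j₂)) * Rn (j₁, j₂) := by
    intro j₁ j₂
    have h := congrFun hu ((j₁ : ZMod N₁), (j₂ : ZMod N₂))
    simp only [Aop, LinearMap.coe_mk, AddHom.coe_mk, fvec, hcdef] at h
    rw [descG_eq hUn (a := (j₁ : ZMod N₁) + 1) (c := (j₂ : ZMod N₂)) (p := j₁ + 1) (q := j₂)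
          (by push_cast; ring) rfl,
        descG_eq hUn (a := (j₁ : ZMod N₁) - 1) (c := (j₂ : ZMod N₂)) (p := j₁ - 1) (q := j₂)
          (by push_cast; ring) rfl,
        descG_eq hUn (a := (j₁ : ZMod N₁)) (c := (j₂ : ZMod N₂) + 1) (p := j₁) (q := j₂ + 1)
          rfl (by push_cast; ring),
        descG_eq hUn (a := (j₁ : ZMod N₁)) (c := (j₂ : ZMod N₂) - 1) (p := j₁) (q := j₂ - 1)
          rfl (by push_cast; ring),
        descG_eq hUn (a := (j₁ : ZMod N₁)) (c := (j₂ : ZMod N₂)) (p := j₁) (q := j₂) rfl rfl,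
        descG_eq hVn (a := (j₁ : ZMod N₁)) (c := (j₂ : ZMod N₂)) (p := j₁) (q := j₂) rfl rfl,
        descG_eq hRn (a := (j₁ : ZMod N₁)) (c := (j₂ : ZMod N₂)) (p := j₁) (q := j₂) rfl rfl,
        descG_eq hW (a := (j₁ : ZMod N₁)) (c := (j₂ : ZMod N₂)) (p := j₁) (q := j₂) rfl rfl] at h
    show (2 / τ ^ 2 + (b (W (j₁, j₂))) ^ 2 / 4) * u ((j₁ : ZMod N₁), (j₂ : ZMod N₂))
      - (1/2) * ((u (((j₁ + 1 : ℤ) : ZMod N₁), (j₂ : ZMod N₂))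
            - 2 * u ((j₁ : ZMod N₁), (j₂ : ZMod N₂))
            + u (((j₁ - 1 : ℤ) : ZMod N₁), (j₂ : ZMod N₂))) / h₁ ^ 2
          + (u ((j₁ : ZMod N₁), ((j₂ + 1 : ℤ) : ZMod N₂))
            - 2 * u ((j₁ : ZMod N₁), (j₂ : ZMod N₂))
            + u ((j₁ : ZMod N₁), ((j₂ - 1 : ℤ) : ZMod N₂))) / h₂ ^ 2) = _
    have c1 : ((j₁ + 1 : ℤ) : ZMod N₁) = (j₁ : ZMod N₁) + 1 := by push_cast; ring
    have c2 : ((j₁ - 1 : ℤ) : ZMod N₁) = (j₁ : ZMod N₁) - 1 := by push_cast; ring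
    have c3 : ((j₂ + 1 : ℤ) : ZMod N₂) = (j₂ : ZMod N₂) + 1 := by push_cast; ring
    have c4 : ((j₂ - 1 : ℤ) : ZMod N₂) = (j₂ : ZMod N₂) - 1 := by push_cast; ring
    rw [c1, c2, c3, c4]
    exact h
  refine ⟨⟨U', V', R'⟩, ⟨hU'per, hV'per, hR'per, ?_, ?_, ?_⟩, ?_⟩
  · -- equation 1
    intro j
    rw [hV'def]
    ring
  · -- equation 2
    rintro ⟨j₁, j₂⟩
    have h := hkey j₁ j₂
    simp only [dxx, dyy, hV'def, hR'def]
    linear_combination h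
  · -- equation 3
    intro j
    rw [hV'def, hR'def]
    ring
  · -- uniqueness
    rintro ⟨U₂, V₂, R₂⟩ ⟨hU₂p, hV₂p, hR₂p, he1, he2, he3⟩
    dsimp only at hU₂p hV₂p hR₂p he1 he2 he3
    have hττ : τ * τ⁻¹ = 1 := mul_inv_cancel₀ hτ'
    have hVsum : ∀ j : ℤ × ℤ, V₂ j + Vn j = 2 * (U₂ j - Un j) / τ := by
      intro j; linear_combination -2 * he1 j
    have hV₂ : ∀ j : ℤ × ℤ, V₂ j = 2 * (U₂ j - Un j) / τ - Vn j := by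
      intro j; linear_combination hVsum j
    have hR₂ : ∀ j : ℤ × ℤ, R₂ j = Rn j + b (W j) / 2 * (U₂ j - Un j) := by
      intro j
      linear_combination τ * he3 j + (b (W j) * τ / 4) * hVsum j
        - (R₂ j - Rn j - b (W j) / 2 * (U₂ j - Un j)) * hττ
    -- U₂ satisfies the key identity, hence descG U₂ solves the torus system
    have hU₂tor : Aop h₁ h₂ c (descG N₁ N₂ U₂) = fvec τ h₁ h₂ N₁ N₂ Un Vn Rn W := by
      funext k
      obtain ⟨a, e⟩ := k
      set j₁ : ℤ := (a.val : ℤ) with hj₁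
      set j₂ : ℤ := (e.val : ℤ) with hj₂
      have ha : (j₁ : ZMod N₁) = a := val_intCast a
      have he : (j₂ : ZMod N₂) = e := val_intCast e
      have h2 := he2 (j₁, j₂)
      rw [hV₂ (j₁, j₂), hR₂ (j₁, j₂)] at h2
      simp only [dxx, dyy] at h2
      show c (a, e) * descG N₁ N₂ U₂ (a, e)
        - (1/2) * ((descG N₁ N₂ U₂ (a + 1, e) - 2 * descG N₁ N₂ U₂ (a, e)
              + descG N₁ N₂ U₂ (a - 1, e)) / h₁ ^ 2
            + (descG N₁ N₂ U₂ (a, e + 1) - 2 * descG N₁ N₂ U₂ (a, e)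
              + descG N₁ N₂ U₂ (a, e - 1)) / h₂ ^ 2)
        = fvec τ h₁ h₂ N₁ N₂ Un Vn Rn W (a, e)
      simp only [fvec, hcdef]
      rw [descG_eq hU₂p (a := a + 1) (c := e) (p := j₁ + 1) (q := j₂)
            (by push_cast [ha]; ring) he,
          descG_eq hU₂p (a := a - 1) (c := e) (p := j₁ - 1) (q := j₂)
            (by push_cast [ha]; ring) he,
          descG_eq hU₂p (a := a) (c := e + 1) (p := j₁) (q := j₂ + 1)
            ha (by push_cast [he]; ring),
          descG_eq hU₂p (a := a) (c := e - 1) (p := j₁) (q := j₂ - 1)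
            ha (by push_cast [he]; ring),
          descG_eq hU₂p (a := a) (c := e) (p := j₁) (q := j₂) ha he,
          descG_eq hUn (a := a + 1) (c := e) (p := j₁ + 1) (q := j₂)
            (by push_cast [ha]; ring) he,
          descG_eq hUn (a := a - 1) (c := e) (p := j₁ - 1) (q := j₂)
            (by push_cast [ha]; ring) he,
          descG_eq hUn (a := a) (c := e + 1) (p := j₁) (q := j₂ + 1)
            ha (by push_cast [he]; ring),
          descG_eq hUn (a := a) (c := e - 1) (p := j₁) (q := j₂ - 1)
            ha (by push_cast [he]; ring),
          descG_eq hUn (a := a) (c := e) (p := j₁) (q := j₂) ha he,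
          descG_eq hVn (a := a) (c := e) (p := j₁) (q := j₂) ha he,
          descG_eq hRn (a := a) (c := e) (p := j₁) (q := j₂) ha he,
          descG_eq hW (a := a) (c := e) (p := j₁) (q := j₂) ha he]
      linear_combination h2
    have hdesc : descG N₁ N₂ U₂ = u :=
      (Aop_bijective h₁ h₂ c hc).1 (hU₂tor.trans hu.symm)
    have hU : U₂ = U' := by
      funext j
      obtain ⟨j₁, j₂⟩ := j
      rw [lift_descG hU₂p, hdesc]
    have hV : V₂ = V' := by
      funext j
      rw [hV₂ j, hV'def, hU]
    have hR : R₂ = R' := by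
      funext j
      rw [hR₂ j, hR'def, hU]
    simp [hU, hV, hR]
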